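/- arXiv:1604.07289 — 5 statements merged into one kernel-verified Lean document; each statement's English description precedes it below -/
import Mathlib

section
/- Let a₁, a₂ and a₁*, a₂* be two bases of ℝ², with α₁₂ the angle between a₁ and a₂, β₁₂ the angle between a₁* and a₂*, and γᵢⱼ the angle between aᵢ and aⱼ*. Then sin²(α₁₂)·cos(β₁₂) = cos(γ₁₁)cos(γ₁₂) + cos(γ₂₁)cos(γ₂₂) − cos(α₁₂)·(cos(γ₁₁)cos(γ₂₂) + cos(γ₁₂)cos(γ₂₁)). -/
open InnerProductGeometry Real
open scoped RealInnerProductSpace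

theorem two_dim_beta_identity (a₁ a₂ b₁ b₂ : EuclideanSpace ℝ (Fin 2))
    (ha : LinearIndependent ℝ ![a₁, a₂]) (hb : LinearIndependent ℝ ![b₁, b₂]) :
    sin (angle a₁ a₂) ^ 2 * cos (angle b₁ b₂)
    = cos (angle a₁ b₁) * cos (angle a₁ b₂) + cos (angle a₂ b₁) * cos (angle a₂ b₂)
      - cos (angle a₁ a₂) *
        (cos (angle a₁ b₁) * cos (angle a₂ b₂) + cos (angle a₁ b₂) * cos (angle a₂ b₁)) := by
  have ha1 : a₁ ≠ 0 := by have := ha.ne_zero 0; simpa using this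
  have ha2 : a₂ ≠ 0 := by have := ha.ne_zero 1; simpa using this
  have hb1 : b₁ ≠ 0 := by have := hb.ne_zero 0; simpa using this
  have hb2 : b₂ ≠ 0 := by have := hb.ne_zero 1; simpa using this
  have na1 : ‖a₁‖ ≠ 0 := norm_ne_zero_iff.mpr ha1
  have na2 : ‖a₂‖ ≠ 0 := norm_ne_zero_iff.mpr ha2
  have nb1 : ‖b₁‖ ≠ 0 := norm_ne_zero_iff.mpr hb1
  have nb2 : ‖b₂‖ ≠ 0 := norm_ne_zero_iff.mpr hb2
  have e1 : ‖a₁‖ ^ 2 = a₁ 0 ^ 2 + a₁ 1 ^ 2 := by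
    rw [← real_inner_self_eq_norm_sq]
    simp only [PiLp.inner_apply, RCLike.inner_apply, conj_trivial, Fin.sum_univ_two]; ring
  have e2 : ‖a₂‖ ^ 2 = a₂ 0 ^ 2 + a₂ 1 ^ 2 := by
    rw [← real_inner_self_eq_norm_sq]
    simp only [PiLp.inner_apply, RCLike.inner_apply, conj_trivial, Fin.sum_univ_two]; ring
  have key : (‖a₁‖ ^ 2 * ‖a₂‖ ^ 2 - (a₁ 0 * a₂ 0 + a₁ 1 * a₂ 1) ^ 2) *
        (b₁ 0 * b₂ 0 + b₁ 1 * b₂ 1)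
      = ‖a₂‖ ^ 2 * ((a₁ 0 * b₁ 0 + a₁ 1 * b₁ 1) * (a₁ 0 * b₂ 0 + a₁ 1 * b₂ 1))
        + ‖a₁‖ ^ 2 * ((a₂ 0 * b₁ 0 + a₂ 1 * b₁ 1) * (a₂ 0 * b₂ 0 + a₂ 1 * b₂ 1))
        - (a₁ 0 * a₂ 0 + a₁ 1 * a₂ 1) *
          ((a₁ 0 * b₁ 0 + a₁ 1 * b₁ 1) * (a₂ 0 * b₂ 0 + a₂ 1 * b₂ 1)
            + (a₁ 0 * b₂ 0 + a₁ 1 * b₂ 1) * (a₂ 0 * b₁ 0 + a₂ 1 * b₁ 1)) := by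
    rw [e1, e2]; ring
  rw [Real.sin_sq, cos_angle, cos_angle, cos_angle, cos_angle, cos_angle, cos_angle]
  simp only [PiLp.inner_apply, RCLike.inner_apply, conj_trivial, Fin.sum_univ_two]
  field_simp
  linear_combination key
end

section
/- Let a₁, a₂ and a₁*, a₂* be two bases of ℝ² with angles α₁₂, γᵢⱼ as above. If cos(γ₁₁)cos(γ₂₁) − cos(γ₁₂)cos(γ₂₂) ≠ 0, then cos(α₁₂) = (cos²(γ₁₁) + cos²(γ₂₁) − cos²(γ₁₂) − cos²(γ₂₂)) / (2(cos(γ₁₁)cos(γ₂₁) − cos(γ₁₂)cos(γ₂₂))). -/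
open InnerProductGeometry Real

private lemma key_id (a₁ a₂ b : EuclideanSpace ℝ (Fin 2))
    (h₁ : a₁ ≠ 0) (h₂ : a₂ ≠ 0) (hb : b ≠ 0) :
    cos (angle a₁ b) ^ 2 + cos (angle a₂ b) ^ 2
      - 2 * cos (angle a₁ a₂) * cos (angle a₁ b) * cos (angle a₂ b)
    = 1 - cos (angle a₁ a₂) ^ 2 := by
  have n1 : ‖a₁‖ ≠ 0 := norm_ne_zero_iff.2 h₁
  have n2 : ‖a₂‖ ≠ 0 := norm_ne_zero_iff.2 h₂
  have nb : ‖b‖ ≠ 0 := norm_ne_zero_iff.2 hb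
  have P : (inner ℝ a₁ b : ℝ) ^ 2 * ‖a₂‖ ^ 2 + (inner ℝ a₂ b : ℝ) ^ 2 * ‖a₁‖ ^ 2
      - 2 * (inner ℝ a₁ a₂ : ℝ) * (inner ℝ a₁ b : ℝ) * (inner ℝ a₂ b : ℝ)
      = (‖a₁‖ ^ 2 * ‖a₂‖ ^ 2 - (inner ℝ a₁ a₂ : ℝ) ^ 2) * ‖b‖ ^ 2 := by
    rw [← real_inner_self_eq_norm_sq, ← real_inner_self_eq_norm_sq,
      ← real_inner_self_eq_norm_sq]
    simp only [PiLp.inner_apply, RCLike.inner_apply, conj_trivial, Fin.sum_univ_two]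
    ring
  rw [cos_angle, cos_angle, cos_angle]
  set i12 : ℝ := inner ℝ a₁ a₂ with hi12
  set i1b : ℝ := inner ℝ a₁ b with hi1b
  set i2b : ℝ := inner ℝ a₂ b with hi2b
  set m1 := ‖a₁‖ with hm1
  set m2 := ‖a₂‖ with hm2
  set mb := ‖b‖ with hmb
  field_simp
  linear_combination P

theorem two_dim_alpha_formula (a₁ a₂ b₁ b₂ : EuclideanSpace ℝ (Fin 2))
    (ha : LinearIndependent ℝ ![a₁, a₂]) (hb : LinearIndependent ℝ ![b₁, b₂])
    (hden : cos (angle a₁ b₁) * cos (angle a₂ b₁)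
      - cos (angle a₁ b₂) * cos (angle a₂ b₂) ≠ 0) :
    cos (angle a₁ a₂)
    = (cos (angle a₁ b₁) ^ 2 + cos (angle a₂ b₁) ^ 2
        - cos (angle a₁ b₂) ^ 2 - cos (angle a₂ b₂) ^ 2)
      / (2 * (cos (angle a₁ b₁) * cos (angle a₂ b₁)
        - cos (angle a₁ b₂) * cos (angle a₂ b₂))) := by
  have ha1 : a₁ ≠ 0 := by have := ha.ne_zero 0; simpa using this
  have ha2 : a₂ ≠ 0 := by have := ha.ne_zero 1; simpa using this
  have hb1 : b₁ ≠ 0 := by have := hb.ne_zero 0; simpa using this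
  have hb2 : b₂ ≠ 0 := by have := hb.ne_zero 1; simpa using this
  have K1 := key_id a₁ a₂ b₁ ha1 ha2 hb1
  have K2 := key_id a₁ a₂ b₂ ha1 ha2 hb2
  field_simp
  linear_combination K2 - K1
end

section
/- Let a₁, a₂, a₃ and a₁*, a₂*, a₃* be mutually reciprocal bases of ℝ³ (⟪aᵢ, aⱼ*⟫ = δᵢⱼ). With αᵢⱼ the angle between aᵢ and aⱼ, and Δ = 2cos(α₁₂)cos(α₁₃)cos(α₂₃) − cos²(α₁₂) − cos²(α₁₃) − cos²(α₂₃) + 1, the angle γ₁₁ between a₁ and a₁* satisfies cos(γ₁₁)·sin(α₂₃) = √Δ. -/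
open InnerProductGeometry Real RealInnerProductSpace

theorem reciprocal_gamma_3d (a b : Fin 3 → EuclideanSpace ℝ (Fin 3))
    (ha : LinearIndependent ℝ a)
    (hrec : ∀ i j, ⟪a i, b j⟫ = if i = j then 1 else 0) :
    cos (angle (a 0) (b 0)) * sin (angle (a 1) (a 2))
    = Real.sqrt (2 * cos (angle (a 0) (a 1)) * cos (angle (a 0) (a 2)) * cos (angle (a 1) (a 2))
        - cos (angle (a 0) (a 1)) ^ 2 - cos (angle (a 0) (a 2)) ^ 2
        - cos (angle (a 1) (a 2)) ^ 2 + 1) := by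
  -- basic nonvanishing
  have ha0 : a 0 ≠ 0 := ha.ne_zero 0
  have ha1 : a 1 ≠ 0 := ha.ne_zero 1
  have ha2 : a 2 ≠ 0 := ha.ne_zero 2
  have hb0 : b 0 ≠ 0 := by
    intro h
    have := hrec 0 0
    simp [h] at this
  -- basis from a
  have hcard : Fintype.card (Fin 3) = Module.finrank ℝ (EuclideanSpace ℝ (Fin 3)) := by
    simp [finrank_euclideanSpace_fin]
  let B := basisOfLinearIndependentOfCardEqFinrank ha hcard
  have hB : ⇑B = a := coe_basisOfLinearIndependentOfCardEqFinrank ha hcard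
  set c : Fin 3 → ℝ := fun i => B.repr (b 0) i with hc
  have hrepr : b 0 = c 0 • a 0 + c 1 • a 1 + c 2 • a 2 := by
    have := B.sum_repr (b 0)
    rw [Fin.sum_univ_three] at this
    rw [← this, hB]
  -- notation
  set n0 := ‖a 0‖; set n1 := ‖a 1‖; set n2 := ‖a 2‖; set m := ‖b 0‖
  have hn0 : 0 < n0 := norm_pos_iff.mpr ha0
  have hn1 : 0 < n1 := norm_pos_iff.mpr ha1
  have hn2 : 0 < n2 := norm_pos_iff.mpr ha2
  have hm : 0 < m := norm_pos_iff.mpr hb0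
  set g01 := ⟪a 0, a 1⟫ with hg01; set g02 := ⟪a 0, a 2⟫ with hg02; set g12 := ⟪a 1, a 2⟫ with hg12
  have hg00 : ⟪a 0, a 0⟫ = n0 ^ 2 := real_inner_self_eq_norm_sq _
  have hg11 : ⟪a 1, a 1⟫ = n1 ^ 2 := real_inner_self_eq_norm_sq _
  have hg22 : ⟪a 2, a 2⟫ = n2 ^ 2 := real_inner_self_eq_norm_sq _
  -- equations from reciprocity
  have E0 : c 0 * n0 ^ 2 + c 1 * g01 + c 2 * g02 = 1 := by
    have h := hrec 0 0
    rw [hrepr] at h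
    simp only [inner_add_right, real_inner_smul_right] at h
    rw [hg00] at h
    simpa [mul_comm] using h
  have E1 : c 0 * g01 + c 1 * n1 ^ 2 + c 2 * g12 = 0 := by
    have h := hrec 1 0
    rw [hrepr] at h
    simp only [inner_add_right, real_inner_smul_right] at h
    rw [hg11, real_inner_comm (a 0) (a 1), ← hg01] at h
    simpa [mul_comm] using h
  have E2 : c 0 * g02 + c 1 * g12 + c 2 * n2 ^ 2 = 0 := by
    have h := hrec 2 0
    rw [hrepr] at h
    simp only [inner_add_right, real_inner_smul_right] at h
    rw [hg22, real_inner_comm (a 0) (a 2), ← hg02, real_inner_comm (a 1) (a 2), ← hg12] at h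
    simpa [mul_comm] using h
  -- norm of b 0 squared equals c 0
  have hm2 : m ^ 2 = c 0 := by
    have h : ⟪b 0, b 0⟫ = c 0 := by
      nth_rewrite 1 [hrepr]
      simp only [inner_add_left, real_inner_smul_left]
      rw [hrec 0 0, hrec 1 0, hrec 2 0]
      simp
    rw [← h, real_inner_self_eq_norm_sq]
  -- Cramer's rule
  have hkey : c 0 * (n0 ^ 2 * n1 ^ 2 * n2 ^ 2 + 2 * g01 * g02 * g12
      - n0 ^ 2 * g12 ^ 2 - n1 ^ 2 * g02 ^ 2 - n2 ^ 2 * g01 ^ 2)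
      = n1 ^ 2 * n2 ^ 2 - g12 ^ 2 := by
    linear_combination (n1 ^ 2 * n2 ^ 2 - g12 ^ 2) * E0
      + (g02 * g12 - g01 * n2 ^ 2) * E1 + (g01 * g12 - g02 * n1 ^ 2) * E2
  have hc0pos : 0 < c 0 := by rw [← hm2]; positivity
  -- trig rewriting
  have hcosg : cos (angle (a 0) (b 0)) = 1 / (n0 * m) := by
    rw [cos_angle, hrec 0 0]; simp; rfl
  have hcos01 : cos (angle (a 0) (a 1)) = g01 / (n0 * n1) := cos_angle _ _
  have hcos02 : cos (angle (a 0) (a 2)) = g02 / (n0 * n2) := cos_angle _ _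
  have hcos12 : cos (angle (a 1) (a 2)) = g12 / (n1 * n2) := cos_angle _ _
  set s := sin (angle (a 1) (a 2)) with hs
  have hsnn : 0 ≤ s :=
    Real.sin_nonneg_of_nonneg_of_le_pi (angle_nonneg _ _) (angle_le_pi _ _)
  have hs2 : s ^ 2 = 1 - (g12 / (n1 * n2)) ^ 2 := by
    have h := sin_sq_add_cos_sq (angle (a 1) (a 2))
    rw [hcos12] at h
    rw [← hs] at h
    linarith
  rw [hcosg, hcos01, hcos02, hcos12]
  have harg : 2 * (g01 / (n0 * n1)) * (g02 / (n0 * n2)) * (g12 / (n1 * n2))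
      - (g01 / (n0 * n1)) ^ 2 - (g02 / (n0 * n2)) ^ 2 - (g12 / (n1 * n2)) ^ 2 + 1
      = (1 / (n0 * m) * s) ^ 2 := by
    have he : (1 / (n0 * m) * s) ^ 2 = s ^ 2 / (n0 ^ 2 * m ^ 2) := by ring
    rw [he, hs2, hm2]
    rw [eq_comm, div_eq_iff (by positivity)]
    field_simp
    linear_combination (-1 : ℝ) * hkey
  rw [harg, Real.sqrt_sq (by positivity)]
end

section
/- Let a₁, a₂, a₃ and a₁*, a₂*, a₃* be mutually reciprocal bases of ℝ³, with αᵢⱼ the angle between aᵢ and aⱼ and βᵢⱼ the angle between aᵢ* and aⱼ*. Then cos(β₁₂) = (cos(α₁₃)cos(α₂₃) − cos(α₁₂))/(sin(α₁₃)sin(α₂₃)). -/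
open InnerProductGeometry Real RealInnerProductSpace

section Aux

variable {E : Type*} [NormedAddCommGroup E] [InnerProductSpace ℝ E]

lemma aux_eq_zero_of_span_top (a : Fin 3 → E)
    (hspan : Submodule.span ℝ (Set.range a) = ⊤) (x : E)
    (hx : ∀ i, ⟪a i, x⟫ = 0) : x = 0 := by
  have hmem : Submodule.span ℝ (Set.range a) ≤ (ℝ ∙ x)ᗮ := by
    rw [Submodule.span_le]
    rintro _ ⟨i, rfl⟩
    simp only [SetLike.mem_coe, Submodule.mem_orthogonal]
    intro w hw
    rw [Submodule.mem_span_singleton] at hw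
    obtain ⟨c, rfl⟩ := hw
    rw [real_inner_smul_left, real_inner_comm, hx i, mul_zero]
  have hxmem : x ∈ (ℝ ∙ x)ᗮ := hmem (hspan ▸ Submodule.mem_top)
  have hzero : ⟪x, x⟫ = 0 :=
    Submodule.inner_left_of_mem_orthogonal (Submodule.mem_span_singleton_self x) hxmem
  exact inner_self_eq_zero.mp hzero

end Aux

set_option maxHeartbeats 1600000 in
theorem reciprocal_beta_3d (a b : Fin 3 → EuclideanSpace ℝ (Fin 3))
    (ha : LinearIndependent ℝ a)
    (hrec : ∀ i j, ⟪a i, b j⟫ = if i = j then 1 else 0) :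
    cos (angle (b 0) (b 1))
    = (cos (angle (a 0) (a 2)) * cos (angle (a 1) (a 2)) - cos (angle (a 0) (a 1)))
      / (sin (angle (a 0) (a 2)) * sin (angle (a 1) (a 2))) := by
  have hspan : Submodule.span ℝ (Set.range a) = ⊤ := by
    apply ha.span_eq_top_of_card_eq_finrank
    simp [finrank_euclideanSpace]
  have key := aux_eq_zero_of_span_top a hspan
  have ha0 : a 0 ≠ 0 := ha.ne_zero 0
  have ha1 : a 1 ≠ 0 := ha.ne_zero 1
  have ha2 : a 2 ≠ 0 := ha.ne_zero 2
  have hA0 : (0:ℝ) < ‖a 0‖ := norm_pos_iff.mpr ha0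
  have hA1 : (0:ℝ) < ‖a 1‖ := norm_pos_iff.mpr ha1
  have hA2 : (0:ℝ) < ‖a 2‖ := norm_pos_iff.mpr ha2
  set c0 : ℝ := ⟪a 0, a 2⟫ / ‖a 2‖ ^ 2 with hc0
  set c1 : ℝ := ⟪a 1, a 2⟫ / ‖a 2‖ ^ 2 with hc1
  set u : EuclideanSpace ℝ (Fin 3) := a 0 - c0 • a 2 with hu
  set v : EuclideanSpace ℝ (Fin 3) := a 1 - c1 • a 2 with hv
  have hA2sq : ⟪a 2, a 2⟫ = ‖a 2‖ ^ 2 := real_inner_self_eq_norm_sq _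
  have hA2ne : (‖a 2‖ : ℝ) ^ 2 ≠ 0 := by positivity
  have hua2 : ⟪u, a 2⟫ = 0 := by
    rw [hu, inner_sub_left, real_inner_smul_left, hA2sq, hc0]
    field_simp
    ring
  have hva2 : ⟪v, a 2⟫ = 0 := by
    rw [hv, inner_sub_left, real_inner_smul_left, hA2sq, hc1]
    field_simp
    ring
  have hb0a2 : ⟪b 0, a 2⟫ = 0 := by rw [real_inner_comm]; simpa using hrec 2 0
  have hb1a2 : ⟪b 1, a 2⟫ = 0 := by rw [real_inner_comm]; simpa using hrec 2 1
  have hb0u : ⟪b 0, u⟫ = 1 := by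
    rw [hu, inner_sub_right, real_inner_smul_right, hb0a2, real_inner_comm]
    simpa using hrec 0 0
  have hb0v : ⟪b 0, v⟫ = 0 := by
    rw [hv, inner_sub_right, real_inner_smul_right, hb0a2, real_inner_comm]
    simpa using hrec 1 0
  have hb1u : ⟪b 1, u⟫ = 0 := by
    rw [hu, inner_sub_right, real_inner_smul_right, hb1a2, real_inner_comm]
    simpa using hrec 0 1
  have hb1v : ⟪b 1, v⟫ = 1 := by
    rw [hv, inner_sub_right, real_inner_smul_right, hb1a2, real_inner_comm]
    simpa using hrec 1 1
  set U : ℝ := ⟪u, u⟫ with hU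
  set V : ℝ := ⟪v, v⟫ with hV
  set W : ℝ := ⟪u, v⟫ with hW
  have hu0 : u ≠ 0 := by
    intro h; rw [h, inner_zero_right] at hb0u; norm_num at hb0u
  have hv0 : v ≠ 0 := by
    intro h; rw [h, inner_zero_right] at hb1v; norm_num at hb1v
  have hUpos : 0 < U := by
    rw [hU, real_inner_self_eq_norm_sq]; exact pow_pos (norm_pos_iff.mpr hu0) 2
  have hVpos : 0 < V := by
    rw [hV, real_inner_self_eq_norm_sq]; exact pow_pos (norm_pos_iff.mpr hv0) 2
  set Δ : ℝ := U * V - W ^ 2 with hΔ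
  have ha0uv : a 0 = u + c0 • a 2 := by rw [hu]; abel
  have ha1uv : a 1 = v + c1 • a 2 := by rw [hv]; abel
  have hau0 : ⟪a 0, u⟫ = U := by
    rw [real_inner_comm]
    conv_lhs => rw [ha0uv]
    rw [inner_add_right, real_inner_smul_right, hua2, hU]; ring
  have hau1 : ⟪a 1, u⟫ = W := by
    rw [real_inner_comm]
    conv_lhs => rw [ha1uv]
    rw [inner_add_right, real_inner_smul_right, hua2, hW]; ring
  have hav0 : ⟪a 0, v⟫ = W := by
    rw [real_inner_comm]
    conv_lhs => rw [ha0uv]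
    rw [inner_add_right, real_inner_smul_right, hva2, real_inner_comm u v, hW]; ring
  have hav1 : ⟪a 1, v⟫ = V := by
    rw [real_inner_comm]
    conv_lhs => rw [ha1uv]
    rw [inner_add_right, real_inner_smul_right, hva2, hV]; ring
  have hau2 : ⟪a 2, u⟫ = 0 := by rw [real_inner_comm]; exact hua2
  have hav2 : ⟪a 2, v⟫ = 0 := by rw [real_inner_comm]; exact hva2
  -- Δ ≠ 0
  have hΔne : Δ ≠ 0 := by
    intro h
    set x : EuclideanSpace ℝ (Fin 3) := V • u - W • v with hx
    have hxu : ⟪x, u⟫ = 0 := by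
      rw [hx, inner_sub_left, real_inner_smul_left, real_inner_smul_left,
        real_inner_comm u v, ← hU, ← hW]
      have h' : U * V - W ^ 2 = 0 := by rw [← hΔ]; exact h
      linear_combination h'
    have hxv : ⟪x, v⟫ = 0 := by
      rw [hx, inner_sub_left, real_inner_smul_left, real_inner_smul_left, ← hV, ← hW]
      ring
    have hxx : ⟪x, x⟫ = 0 := by
      nth_rewrite 2 [hx]
      rw [inner_sub_right, real_inner_smul_right, real_inner_smul_right, hxu, hxv]
      ring
    have hx0 : x = 0 := inner_self_eq_zero.mp hxx
    have h0 : ⟪b 0, x⟫ = 0 := by rw [hx0, inner_zero_right]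
    rw [hx, inner_sub_right, real_inner_smul_right, real_inner_smul_right,
      hb0u, hb0v] at h0
    have : V = 0 := by linarith
    exact absurd this (ne_of_gt hVpos)
  have hΔne' : U * V - W ^ 2 ≠ 0 := by rw [← hΔ]; exact hΔne
  -- expressions for b 0 and b 1
  have hb0eq : b 0 = (Δ⁻¹ * V) • u - (Δ⁻¹ * W) • v := by
    apply sub_eq_zero.mp
    apply key
    have e0 : ⟪a 0, b 0 - ((Δ⁻¹ * V) • u - (Δ⁻¹ * W) • v)⟫ = 0 := by
      rw [inner_sub_right, inner_sub_right, real_inner_smul_right, real_inner_smul_right,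
        hau0, hav0]
      have h := hrec 0 0; rw [if_pos rfl] at h; rw [h, hΔ]
      field_simp [hΔne']
      ring
    have e1 : ⟪a 1, b 0 - ((Δ⁻¹ * V) • u - (Δ⁻¹ * W) • v)⟫ = 0 := by
      rw [inner_sub_right, inner_sub_right, real_inner_smul_right, real_inner_smul_right,
        hau1, hav1]
      have h := hrec 1 0; rw [if_neg (by decide)] at h; rw [h]
      ring
    have e2 : ⟪a 2, b 0 - ((Δ⁻¹ * V) • u - (Δ⁻¹ * W) • v)⟫ = 0 := by
      rw [inner_sub_right, inner_sub_right, real_inner_smul_right, real_inner_smul_right,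
        hau2, hav2, real_inner_comm (b 0) (a 2), hb0a2]
      ring
    intro i
    fin_cases i
    · exact e0
    · exact e1
    · exact e2
  have hb1eq : b 1 = (Δ⁻¹ * U) • v - (Δ⁻¹ * W) • u := by
    apply sub_eq_zero.mp
    apply key
    have e0 : ⟪a 0, b 1 - ((Δ⁻¹ * U) • v - (Δ⁻¹ * W) • u)⟫ = 0 := by
      rw [inner_sub_right, inner_sub_right, real_inner_smul_right, real_inner_smul_right,
        hav0, hau0]
      have h := hrec 0 1; rw [if_neg (by decide)] at h; rw [h]
      ring
    have e1 : ⟪a 1, b 1 - ((Δ⁻¹ * U) • v - (Δ⁻¹ * W) • u)⟫ = 0 := by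
      rw [inner_sub_right, inner_sub_right, real_inner_smul_right, real_inner_smul_right,
        hav1, hau1]
      have h := hrec 1 1; rw [if_pos rfl] at h; rw [h, hΔ]
      field_simp [hΔne']
      ring
    have e2 : ⟪a 2, b 1 - ((Δ⁻¹ * U) • v - (Δ⁻¹ * W) • u)⟫ = 0 := by
      rw [inner_sub_right, inner_sub_right, real_inner_smul_right, real_inner_smul_right,
        hav2, hau2, real_inner_comm (b 1) (a 2), hb1a2]
      ring
    intro i
    fin_cases i
    · exact e0
    · exact e1
    · exact e2
  -- norms and inner product of b 0, b 1
  have hnb0 : ‖b 0‖ ^ 2 = V / Δ := by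
    rw [← real_inner_self_eq_norm_sq]
    nth_rewrite 2 [hb0eq]
    rw [inner_sub_right, real_inner_smul_right, real_inner_smul_right, hb0u, hb0v,
      div_eq_mul_inv]
    ring
  have hnb1 : ‖b 1‖ ^ 2 = U / Δ := by
    rw [← real_inner_self_eq_norm_sq]
    nth_rewrite 2 [hb1eq]
    rw [inner_sub_right, real_inner_smul_right, real_inner_smul_right, hb1v, hb1u,
      div_eq_mul_inv]
    ring
  have hb0b1 : ⟪b 0, b 1⟫ = -W / Δ := by
    rw [hb1eq, inner_sub_right, real_inner_smul_right, real_inner_smul_right, hb0u, hb0v,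
      div_eq_mul_inv]
    ring
  have hΔpos : 0 < Δ := by
    rcases lt_or_gt_of_ne hΔne with h | h
    · exfalso
      have hlt : V / Δ < 0 := div_neg_of_pos_of_neg hVpos h
      have hge : (0:ℝ) ≤ V / Δ := hnb0 ▸ sq_nonneg ‖b 0‖
      linarith
    · exact h
  have hnu : ‖u‖ ^ 2 = U := (real_inner_self_eq_norm_sq u).symm
  have hnv : ‖v‖ ^ 2 = V := (real_inner_self_eq_norm_sq v).symm
  have hnupos : 0 < ‖u‖ := norm_pos_iff.mpr hu0
  have hnvpos : 0 < ‖v‖ := norm_pos_iff.mpr hv0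
  have hprod : ‖b 0‖ * ‖b 1‖ = ‖u‖ * ‖v‖ / Δ := by
    have h1 : (‖b 0‖ * ‖b 1‖) ^ 2 = (‖u‖ * ‖v‖ / Δ) ^ 2 := by
      rw [mul_pow, hnb0, hnb1, div_pow, mul_pow, hnu, hnv]
      field_simp
    have h2 : 0 ≤ ‖b 0‖ * ‖b 1‖ := by positivity
    have h3 : 0 ≤ ‖u‖ * ‖v‖ / Δ := by positivity
    exact (pow_left_inj₀ h2 h3 two_ne_zero).mp h1
  have hLHS : cos (angle (b 0) (b 1)) = -W / (‖u‖ * ‖v‖) := by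
    rw [cos_angle, hb0b1, hprod]
    rw [div_div_div_eq, mul_comm Δ (‖u‖ * ‖v‖), ← div_div_div_eq, div_self (ne_of_gt hΔpos),
      div_one]
  -- sines
  have hsin02 : sin (angle (a 0) (a 2)) * (‖a 0‖ * ‖a 2‖) = ‖u‖ * ‖a 2‖ := by
    rw [sin_angle_mul_norm_mul_norm]
    have harg : ⟪a 0, a 0⟫ * ⟪a 2, a 2⟫ - ⟪a 0, a 2⟫ * ⟪a 0, a 2⟫
        = (‖u‖ * ‖a 2‖) ^ 2 := by
      have hU' : U = ⟪a 0, a 0⟫ - c0 * ⟪a 0, a 2⟫ := by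
        rw [← hau0, hu, inner_sub_right, real_inner_smul_right]
      rw [mul_pow, hnu, hU', hA2sq, hc0, real_inner_self_eq_norm_sq]
      field_simp
    rw [harg, Real.sqrt_sq (by positivity)]
  have hsin12 : sin (angle (a 1) (a 2)) * (‖a 1‖ * ‖a 2‖) = ‖v‖ * ‖a 2‖ := by
    rw [sin_angle_mul_norm_mul_norm]
    have harg : ⟪a 1, a 1⟫ * ⟪a 2, a 2⟫ - ⟪a 1, a 2⟫ * ⟪a 1, a 2⟫
        = (‖v‖ * ‖a 2‖) ^ 2 := by
      have hV' : V = ⟪a 1, a 1⟫ - c1 * ⟪a 1, a 2⟫ := by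
        rw [← hav1, hv, inner_sub_right, real_inner_smul_right]
      rw [mul_pow, hnv, hV', hA2sq, hc1, real_inner_self_eq_norm_sq]
      field_simp
    rw [harg, Real.sqrt_sq (by positivity)]
  have hs02 : sin (angle (a 0) (a 2)) = ‖u‖ / ‖a 0‖ := by
    rw [show sin (angle (a 0) (a 2)) * (‖a 0‖ * ‖a 2‖)
        = (sin (angle (a 0) (a 2)) * ‖a 0‖) * ‖a 2‖ by ring] at hsin02
    have h2 := mul_right_cancel₀ (ne_of_gt hA2) hsin02
    rw [eq_div_iff (ne_of_gt hA0)]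
    exact h2
  have hs12 : sin (angle (a 1) (a 2)) = ‖v‖ / ‖a 1‖ := by
    rw [show sin (angle (a 1) (a 2)) * (‖a 1‖ * ‖a 2‖)
        = (sin (angle (a 1) (a 2)) * ‖a 1‖) * ‖a 2‖ by ring] at hsin12
    have h2 := mul_right_cancel₀ (ne_of_gt hA2) hsin12
    rw [eq_div_iff (ne_of_gt hA1)]
    exact h2
  have hWa : W = ⟪a 0, a 1⟫ - ⟪a 0, a 2⟫ * ⟪a 1, a 2⟫ / ‖a 2‖ ^ 2 := by
    rw [hW, hu, hv, inner_sub_left, inner_sub_right, inner_sub_right,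
      real_inner_smul_left, real_inner_smul_left, real_inner_smul_right,
      real_inner_smul_right, hA2sq, hc0, hc1, real_inner_comm (a 1) (a 2)]
    field_simp
    ring
  rw [hLHS, cos_angle, cos_angle, cos_angle, hs02, hs12, hWa]
  field_simp
  ring
end

section
/- Let a₁, a₂, a₃ and a₁*, a₂*, a₃* be two bases of ℝ³, with αᵢⱼ the angle between aᵢ and aⱼ and γᵢⱼ the angle between aᵢ and aⱼ*. Set Δ = 2cos(α₁₂)cos(α₁₃)cos(α₂₃) − cos²(α₁₂) − cos²(α₁₃) − cos²(α₂₃) + 1, Ω₁ = cos(α₁₂)cos(α₁₃) − cos(α₂₃), Ω₂ = cos(α₁₂)cos(α₂₃) − cos(α₁₃), Ω₃ = cos(α₁₃)cos(α₂₃) − cos(α₁₂). Then 2[cos(γ₂₁)cos(γ₃₁)Ω₁ + cos(γ₁₁)cos(γ₃₁)Ω₂ + cos(γ₁₁)cos(γ₂₁)Ω₃] + cos²(γ₃₁)sin²(α₁₂) + cos²(γ₂₁)sin²(α₁₃) + cos²(γ₁₁)sin²(α₂₃) = Δ. -/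
open InnerProductGeometry Real

lemma cos_angle_norm {x y : EuclideanSpace ℝ (Fin 3)} (hx : x ≠ 0) (hy : y ≠ 0) :
    cos (angle x y) = inner ℝ (‖x‖⁻¹ • x) (‖y‖⁻¹ • y) := by
  have hx' : ‖x‖ ≠ 0 := norm_ne_zero_iff.mpr hx
  have hy' : ‖y‖ ≠ 0 := norm_ne_zero_iff.mpr hy
  rw [cos_angle, real_inner_smul_left, real_inner_smul_right]
  field_simp

theorem three_dim_angle_identity (a b : Fin 3 → EuclideanSpace ℝ (Fin 3))
    (ha : LinearIndependent ℝ a) (hb : LinearIndependent ℝ b) :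
    2 * (cos (angle (a 1) (b 0)) * cos (angle (a 2) (b 0))
          * (cos (angle (a 0) (a 1)) * cos (angle (a 0) (a 2)) - cos (angle (a 1) (a 2)))
        + cos (angle (a 0) (b 0)) * cos (angle (a 2) (b 0))
          * (cos (angle (a 0) (a 1)) * cos (angle (a 1) (a 2)) - cos (angle (a 0) (a 2)))
        + cos (angle (a 0) (b 0)) * cos (angle (a 1) (b 0))
          * (cos (angle (a 0) (a 2)) * cos (angle (a 1) (a 2)) - cos (angle (a 0) (a 1))))
      + cos (angle (a 2) (b 0)) ^ 2 * sin (angle (a 0) (a 1)) ^ 2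
      + cos (angle (a 1) (b 0)) ^ 2 * sin (angle (a 0) (a 2)) ^ 2
      + cos (angle (a 0) (b 0)) ^ 2 * sin (angle (a 1) (a 2)) ^ 2
    = 2 * cos (angle (a 0) (a 1)) * cos (angle (a 0) (a 2)) * cos (angle (a 1) (a 2))
      - cos (angle (a 0) (a 1)) ^ 2 - cos (angle (a 0) (a 2)) ^ 2
      - cos (angle (a 1) (a 2)) ^ 2 + 1 := by
  have h0 : a 0 ≠ 0 := ha.ne_zero 0
  have h1 : a 1 ≠ 0 := ha.ne_zero 1
  have h2 : a 2 ≠ 0 := ha.ne_zero 2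
  have hb0 : b 0 ≠ 0 := hb.ne_zero 0
  set u0 : EuclideanSpace ℝ (Fin 3) := ‖a 0‖⁻¹ • a 0 with hu0
  set u1 : EuclideanSpace ℝ (Fin 3) := ‖a 1‖⁻¹ • a 1 with hu1
  set u2 : EuclideanSpace ℝ (Fin 3) := ‖a 2‖⁻¹ • a 2 with hu2
  set w : EuclideanSpace ℝ (Fin 3) := ‖b 0‖⁻¹ • b 0 with hw
  have hs0 : (inner ℝ u0 u0 : ℝ) = 1 := by
    have : ‖u0‖ = 1 := by
      rw [hu0, norm_smul, norm_inv, norm_norm, inv_mul_cancel₀ (norm_ne_zero_iff.mpr h0)]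
    rw [real_inner_self_eq_norm_sq, this]; norm_num
  have hs1 : (inner ℝ u1 u1 : ℝ) = 1 := by
    have : ‖u1‖ = 1 := by
      rw [hu1, norm_smul, norm_inv, norm_norm, inv_mul_cancel₀ (norm_ne_zero_iff.mpr h1)]
    rw [real_inner_self_eq_norm_sq, this]; norm_num
  have hs2 : (inner ℝ u2 u2 : ℝ) = 1 := by
    have : ‖u2‖ = 1 := by
      rw [hu2, norm_smul, norm_inv, norm_norm, inv_mul_cancel₀ (norm_ne_zero_iff.mpr h2)]
    rw [real_inner_self_eq_norm_sq, this]; norm_num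
  have hsv : (inner ℝ w w : ℝ) = 1 := by
    have : ‖w‖ = 1 := by
      rw [hw, norm_smul, norm_inv, norm_norm, inv_mul_cancel₀ (norm_ne_zero_iff.mpr hb0)]
    rw [real_inner_self_eq_norm_sq, this]; norm_num
  rw [sin_sq, sin_sq, sin_sq,
    cos_angle_norm h0 h1, cos_angle_norm h0 h2, cos_angle_norm h1 h2,
    cos_angle_norm h0 hb0, cos_angle_norm h1 hb0, cos_angle_norm h2 hb0]
  rw [← hu0, ← hu1, ← hu2, ← hw]
  simp only [PiLp.inner_apply, RCLike.inner_apply, conj_trivial, Fin.sum_univ_three] at hs0 hs1 hs2 hsv ⊢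
  linear_combination (2*(u1 0 * w 0 + u1 1 * w 1 + u1 2 * w 2)*(u2 0 * w 0 + u2 1 * w 1 + u2 2 * w 2)*(u1 0 * u2 0 + u1 1 * u2 1 + u1 2 * u2 2) - (u2 0 * w 0 + u2 1 * w 1 + u2 2 * w 2)^2 - (u1 0 * w 0 + u1 1 * w 1 + u1 2 * w 2)^2 - (u1 0 * u2 0 + u1 1 * u2 1 + u1 2 * u2 2)^2 + (u1 0 * u1 0 + u1 1 * u1 1 + u1 2 * u1 2)*(u2 0 * u2 0 + u2 1 * u2 1 + u2 2 * u2 2)) * hs0 + (2*(u0 0 * w 0 + u0 1 * w 1 + u0 2 * w 2)*(u2 0 * w 0 + u2 1 * w 1 + u2 2 * w 2)*(u0 0 * u2 0 + u0 1 * u2 1 + u0 2 * u2 2) - (u2 0 * w 0 + u2 1 * w 1 + u2 2 * w 2)^2*(u0 0 * u0 0 + u0 1 * u0 1 + u0 2 * u0 2) - (u0 0 * w 0 + u0 1 * w 1 + u0 2 * w 2)^2 - (u0 0 * u2 0 + u0 1 * u2 1 + u0 2 * u2 2)^2 + (u2 0 * u2 0 + u2 1 * u2 1 + u2 2 * u2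 2)) * hs1 + (2*(u0 0 * w 0 + u0 1 * w 1 + u0 2 * w 2)*(u1 0 * w 0 + u1 1 * w 1 + u1 2 * w 2)*(u0 0 * u1 0 + u0 1 * u1 1 + u0 2 * u1 2) - (u1 0 * w 0 + u1 1 * w 1 + u1 2 * w 2)^2*(u0 0 * u0 0 + u0 1 * u0 1 + u0 2 * u0 2) - (u0 0 * w 0 + u0 1 * w 1 + u0 2 * w 2)^2*(u1 0 * u1 0 + u1 1 * u1 1 + u1 2 * u1 2) - (u0 0 * u1 0 + u0 1 * u1 1 + u0 2 * u1 2)^2 + 1) * hs2 + (u0 0*(u1 1*u2 2 - u1 2*u2 1) - u0 1*(u1 0*u2 2 - u1 2*u2 0) + u0 2*(u1 0*u2 1 - u1 1*u2 0))^2 * hsv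
end
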